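/- arXiv:1811.07784 — 3 statements merged into one kernel-verified Lean document; each statement's English description precedes it below -/
import Mathlib

section
/- Let m ≥ 2, u₀ ≥ m, θ ≥ 1, t₁ ≥ 1 and ω ≥ -1 be integers, let N₁, ..., N_m and D₁, ..., D_m be positive integers, set Λ = θ·(2t₁u₀)^{u₀}·(1 + max_{1≤i≤m} N_i)·∏_{i=1}^m D_i and ψ(u) = ∏_{j=u+1}^{u₀} (ω'j + 1) with ω' = ω + 3. Let 0 ≤ u ≤ u₀ be an integer, let u₁, ..., u_m ≥ 0 be integers with u₁ + ... + u_m = u, and let d₁, ..., d_m be positive integers with d_i ≤ D_i·Λ^{ψ(u)-1} for all i. Then ∑_{i=1}^m d_i(u_i+1)·log(2d_i(N_i+1)) < (1/2)·Λ^{2ψ(u)}. -/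
set_option maxHeartbeats 1000000 in
/-- Let `m ≥ 2`, `u₀ ≥ m`, `θ ≥ 1`, `t₁ ≥ 1` and `ω ≥ -1` be integers, let `N₁, ..., N_m`
and `D₁, ..., D_m` be positive integers, set `Λ = θ·(2t₁u₀)^{u₀}·(1 + max_i N_i)·∏_i D_i`
and `ψ(u) = ∏_{j=u+1}^{u₀} (ω'j + 1)` with `ω' = ω + 3`. Let `0 ≤ u ≤ u₀` be an integer,
let `u₁, ..., u_m ≥ 0` be integers with `u₁ + ... + u_m = u`, and let `d₁, ..., d_m` be
positive integers with `d_i ≤ D_i·Λ^{ψ(u)-1}` for all `i`. Then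
`∑_i d_i(u_i+1)·log(2d_i(N_i+1)) < (1/2)·Λ^{2ψ(u)}`. -/
theorem stmt_9 (m u₀ θ t₁ : ℕ) (hm : 2 ≤ m) (hu₀ : m ≤ u₀) (hθ : 1 ≤ θ) (ht₁ : 1 ≤ t₁)
    (ω : ℤ) (hω : -1 ≤ ω) (N D : Fin m → ℕ) (hN : ∀ i, 1 ≤ N i) (hD : ∀ i, 1 ≤ D i)
    (Λ : ℕ) (hΛ : Λ = θ * (2 * t₁ * u₀) ^ u₀ * (1 + Finset.univ.sup N) * ∏ i, D i)
    (ψ : ℕ → ℤ) (hψ : ∀ u, ψ u = ∏ j ∈ Finset.Icc (u + 1) u₀, ((ω + 3) * (j : ℤ) + 1))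
    (u : ℕ) (hu : u ≤ u₀) (uvec : Fin m → ℕ) (huvec : ∑ i, uvec i = u)
    (d : Fin m → ℕ) (hd1 : ∀ i, 1 ≤ d i)
    (hd2 : ∀ i, (d i : ℝ) ≤ (D i : ℝ) * (Λ : ℝ) ^ (ψ u - 1)) :
    ∑ i, (d i : ℝ) * ((uvec i : ℝ) + 1) * Real.log (2 * (d i : ℝ) * ((N i : ℝ) + 1)) <
      1 / 2 * (Λ : ℝ) ^ (2 * ψ u) := by
  set B : ℕ := 1 + Finset.univ.sup N with hB
  set C : ℕ := ∏ i, D i with hC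
  set A : ℕ := (2 * t₁ * u₀) ^ u₀ with hA'
  have h2 : 2 ≤ u₀ := le_trans hm hu₀
  have hC1 : 1 ≤ C := Finset.one_le_prod' fun i _ => hD i
  have hB2 : 2 ≤ B := by
    have : 1 ≤ Finset.univ.sup N := le_trans (hN ⟨0, by omega⟩)
      (Finset.le_sup (Finset.mem_univ _))
    omega
  have hA1 : 1 ≤ A := Nat.one_le_pow _ _ (Nat.mul_pos (Nat.mul_pos two_pos ht₁) (by omega))
  have hΛ1 : 1 ≤ Λ := by
    rw [hΛ]
    calc 1 = 1 * 1 * 1 * 1 := rfl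
    _ ≤ θ * A * B * C :=
      Nat.mul_le_mul (Nat.mul_le_mul (Nat.mul_le_mul hθ hA1) (by omega)) hC1
  have hL0 : (0:ℝ) < (Λ:ℝ) := by exact_mod_cast hΛ1
  have hL1 : (1:ℝ) ≤ (Λ:ℝ) := by exact_mod_cast hΛ1
  have hψ1 : 1 ≤ ψ u := by
    rw [hψ]
    calc (1:ℤ) = ∏ j ∈ Finset.Icc (u+1) u₀, 1 := by simp
    _ ≤ _ := Finset.prod_le_prod (fun j _ => zero_le_one) (fun j hj => by
        have hj1 : u + 1 ≤ j := (Finset.mem_Icc.mp hj).1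
        have : (1:ℤ) ≤ (j:ℤ) := by exact_mod_cast Nat.one_le_iff_ne_zero.mpr (by omega)
        nlinarith)
  set P : ℝ := (Λ:ℝ) ^ (ψ u - 1) with hP
  have hP1 : (1:ℝ) ≤ P := one_le_zpow₀ hL1 (by omega)
  have hP0 : (0:ℝ) < P := lt_of_lt_of_le one_pos hP1
  clear_value P
  -- key natural-number inequality
  have hK : 4 * (m * (B * (C ^ 2 * (u₀ + 1)))) ≤ Λ ^ 2 := by
    have hAA : (2 * u₀) ^ 4 ≤ A ^ 2 := by
      rw [hA', ← pow_mul]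
      calc (2*u₀)^4 ≤ (2*u₀)^(u₀*2) := Nat.pow_le_pow_right (by omega) (by omega)
      _ ≤ (2*t₁*u₀)^(u₀*2) := Nat.pow_le_pow_left (by nlinarith) _
    have hnum : 4 * (m * (u₀ + 1)) ≤ (2 * u₀) ^ 4 := by
      have h1 : m * (u₀ + 1) ≤ u₀ * (2 * u₀) := Nat.mul_le_mul hu₀ (by omega)
      have h5 : u₀ ^ 2 * 1 ≤ u₀ ^ 2 * u₀ ^ 2 := Nat.mul_le_mul_left _ (by nlinarith)
      nlinarith [h1, h5]
    have hBB : B ≤ B ^ 2 := by rw [pow_two]; exact Nat.le_mul_of_pos_left B (by omega)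
    calc 4 * (m * (B * (C ^ 2 * (u₀ + 1))))
        = (4 * (m * (u₀ + 1))) * (B * C ^ 2) := by ring
    _ ≤ ((2*u₀)^4) * (B^2 * C ^ 2) :=
        Nat.mul_le_mul hnum (Nat.mul_le_mul hBB le_rfl)
    _ ≤ (A^2) * (B^2 * C^2) := Nat.mul_le_mul_right _ hAA
    _ ≤ (θ^2) * ((A^2) * (B^2 * C^2)) := Nat.le_mul_of_pos_left _ (by positivity)
    _ = (θ * A * B * C)^2 := by ring
    _ = Λ^2 := by rw [hΛ]
  -- pointwise bound
  have hbound : ∀ i : Fin m, (d i : ℝ) * ((uvec i : ℝ) + 1) * Real.log (2 * (d i : ℝ) * ((N i : ℝ) + 1))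
      < ((C:ℝ) * P) * ((u₀:ℝ) + 1) * (2 * ((C:ℝ) * P) * (B:ℝ)) := by
    intro i
    have hd0 : (0:ℝ) < d i := by exact_mod_cast hd1 i
    have hN0 : (0:ℝ) < (N i : ℝ) + 1 := by positivity
    have hx : (0:ℝ) < 2 * (d i : ℝ) * ((N i : ℝ) + 1) := by positivity
    have hdC : (d i : ℝ) ≤ (C:ℝ) * P := by
      refine le_trans (hd2 i) ?_
      have : (D i : ℝ) ≤ (C:ℝ) := by
        exact_mod_cast Finset.single_le_prod' (fun j _ => hD j) (Finset.mem_univ i)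
      exact mul_le_mul_of_nonneg_right this hP0.le
    have huu : ((uvec i : ℝ)) ≤ (u₀:ℝ) := by
      have : uvec i ≤ u := huvec ▸ Finset.single_le_sum (fun j _ => Nat.zero_le _) (Finset.mem_univ i)
      exact_mod_cast le_trans this hu
    have hNB : ((N i : ℝ) + 1) ≤ (B:ℝ) := by
      have : N i + 1 ≤ B := by
        have := Finset.le_sup (f := N) (Finset.mem_univ i); omega
      exact_mod_cast this
    have hlog : Real.log (2 * (d i : ℝ) * ((N i : ℝ) + 1)) < 2 * (d i : ℝ) * ((N i : ℝ) + 1) :=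
      lt_of_le_of_lt (Real.log_le_sub_one_of_pos hx) (by linarith)
    calc (d i : ℝ) * ((uvec i : ℝ) + 1) * Real.log (2 * (d i : ℝ) * ((N i : ℝ) + 1))
        < (d i : ℝ) * ((uvec i : ℝ) + 1) * (2 * (d i : ℝ) * ((N i : ℝ) + 1)) := by
          have hpos : (0:ℝ) < (d i : ℝ) * ((uvec i : ℝ) + 1) := by positivity
          exact mul_lt_mul_of_pos_left hlog hpos
    _ ≤ ((C:ℝ) * P) * ((u₀:ℝ) + 1) * (2 * ((C:ℝ) * P) * (B:ℝ)) := by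
          have hCP : (0:ℝ) ≤ (C:ℝ) * P := mul_nonneg (Nat.cast_nonneg _) hP0.le
          have h1 : (d i : ℝ) * ((uvec i : ℝ) + 1) ≤ ((C:ℝ) * P) * ((u₀:ℝ) + 1) :=
            mul_le_mul hdC (by linarith) (by positivity) hCP
          have h2 : 2 * (d i : ℝ) * ((N i : ℝ) + 1) ≤ 2 * ((C:ℝ) * P) * (B:ℝ) :=
            mul_le_mul (by linarith) hNB hN0.le (by linarith)
          exact mul_le_mul h1 h2 (by positivity) (mul_nonneg hCP (by positivity))
  -- sum bound
  have hsum : ∑ i, (d i : ℝ) * ((uvec i : ℝ) + 1) * Real.log (2 * (d i : ℝ) * ((N i : ℝ) + 1))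
      < (m:ℝ) * (((C:ℝ) * P) * ((u₀:ℝ) + 1) * (2 * ((C:ℝ) * P) * (B:ℝ))) := by
    have : Nonempty (Fin m) := ⟨⟨0, by omega⟩⟩
    calc _ < ∑ _i : Fin m, ((C:ℝ) * P) * ((u₀:ℝ) + 1) * (2 * ((C:ℝ) * P) * (B:ℝ)) :=
          Finset.sum_lt_sum_of_nonempty Finset.univ_nonempty (fun i _ => hbound i)
    _ = _ := by rw [Finset.sum_const, Finset.card_univ, Fintype.card_fin, nsmul_eq_mul]
  refine hsum.trans_le ?_
  have hzpow : (Λ:ℝ) ^ (2 * ψ u) = (Λ:ℝ)^2 * P^2 := by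
    have h : 2 * ψ u = 2 + (ψ u - 1) * 2 := by ring
    rw [h, zpow_add₀ hL0.ne', zpow_mul, hP]
    simp [zpow_two, pow_two]
  rw [hzpow]
  have hKr : (4:ℝ) * ((m:ℝ) * ((B:ℝ) * ((C:ℝ)^2 * ((u₀:ℝ) + 1)))) ≤ (Λ:ℝ)^2 := by
    exact_mod_cast hK
  have heq : (m:ℝ) * (((C:ℝ) * P) * ((u₀:ℝ) + 1) * (2 * ((C:ℝ) * P) * (B:ℝ)))
      = 1 / 2 * (((4:ℝ) * ((m:ℝ) * ((B:ℝ) * ((C:ℝ)^2 * ((u₀:ℝ) + 1))))) * P^2) := by ring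
  rw [heq]
  have : ((4:ℝ) * ((m:ℝ) * ((B:ℝ) * ((C:ℝ)^2 * ((u₀:ℝ) + 1))))) * P^2 ≤ (Λ:ℝ)^2 * P^2 :=
    mul_le_mul_of_nonneg_right hKr (by positivity)
  linarith
end

section
/- Let m ≥ 2, u₀ ≥ m, θ ≥ 1, t₁ ≥ 1 and ω ≥ -1 be integers, let N₁, ..., N_m and D₁, ..., D_m be positive integers, set ω' = ω + 3, Λ = θ·(2t₁u₀)^{u₀}·(1 + max_{1≤i≤m} N_i)·∏_{i=1}^m D_i and ψ(u) = ∏_{j=u+1}^{u₀} (ω'j + 1). Let 1 ≤ u ≤ u₀ be an integer and let d₁, ..., d_m be positive integers with ∏_{i=1}^m d_i ≤ (∏_{i=1}^m D_i)·Λ^{ψ(u)-1}. Then 8·u·θ·(t₁m)^u·∏_{i=1}^m d_i^{1+ω} ≤ Λ^{ω'·u·ψ(u)}. -/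
/-- Let `m ≥ 2`, `u₀ ≥ m`, `θ ≥ 1`, `t₁ ≥ 1` and `ω ≥ -1` be integers, let `N₁, ..., N_m`
and `D₁, ..., D_m` be positive integers, set `ω' = ω + 3`,
`Λ = θ·(2t₁u₀)^{u₀}·(1 + max_i N_i)·∏_i D_i` and `ψ(u) = ∏_{j=u+1}^{u₀} (ω'j + 1)`.
Let `1 ≤ u ≤ u₀` be an integer and let `d₁, ..., d_m` be positive integers with
`∏_i d_i ≤ (∏_i D_i)·Λ^{ψ(u)-1}`. Then `8·u·θ·(t₁m)^u·∏_i d_i^{1+ω} ≤ Λ^{ω'·u·ψ(u)}`. -/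
theorem stmt_12 (m u₀ θ t₁ : ℕ) (hm : 2 ≤ m) (hu₀ : m ≤ u₀) (hθ : 1 ≤ θ) (ht₁ : 1 ≤ t₁)
    (ω : ℤ) (hω : -1 ≤ ω) (N D : Fin m → ℕ) (hN : ∀ i, 1 ≤ N i) (hD : ∀ i, 1 ≤ D i)
    (Λ : ℕ) (hΛ : Λ = θ * (2 * t₁ * u₀) ^ u₀ * (1 + Finset.univ.sup N) * ∏ i, D i)
    (ψ : ℕ → ℤ) (hψ : ∀ u, ψ u = ∏ j ∈ Finset.Icc (u + 1) u₀, ((ω + 3) * (j : ℤ) + 1))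
    (u : ℕ) (hu1 : 1 ≤ u) (hu2 : u ≤ u₀)
    (d : Fin m → ℕ) (hd1 : ∀ i, 1 ≤ d i)
    (hd2 : (∏ i, (d i : ℝ)) ≤ (∏ i, (D i : ℝ)) * (Λ : ℝ) ^ (ψ u - 1)) :
    8 * (u : ℝ) * (θ : ℝ) * ((t₁ : ℝ) * (m : ℝ)) ^ u * ∏ i, (d i : ℝ) ^ (1 + ω) ≤
      (Λ : ℝ) ^ ((ω + 3) * (u : ℤ) * ψ u) := by
  have h2u₀ : 2 ≤ u₀ := hm.trans hu₀
  set X : ℕ := (2 * t₁ * u₀) ^ u₀ with hX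
  have hbase : 4 ≤ 2 * t₁ * u₀ := by nlinarith
  have hDprod : 1 ≤ ∏ i, D i := Finset.one_le_prod' fun i _ => hD i
  have hsup : 1 ≤ 1 + Finset.univ.sup N := Nat.le_add_right 1 _
  have hXΛ : X ≤ Λ := by
    rw [hΛ]
    calc X = 1 * X * 1 * 1 := by ring
    _ ≤ θ * X * (1 + Finset.univ.sup N) * ∏ i, D i :=
      Nat.mul_le_mul (Nat.mul_le_mul (Nat.mul_le_mul hθ le_rfl) hsup) hDprod
  have hθXΛ : θ * X ≤ Λ := by
    rw [hΛ]
    calc θ * X = θ * X * 1 * 1 := by ring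
    _ ≤ θ * X * (1 + Finset.univ.sup N) * ∏ i, D i :=
      Nat.mul_le_mul (Nat.mul_le_mul le_rfl hsup) hDprod
  have h8u : 8 * u ≤ X := by
    calc 8 * u ≤ (2 * t₁ * u₀) ^ 2 := by nlinarith
    _ ≤ X := Nat.pow_le_pow_right (by omega) h2u₀
  have htm : (t₁ * m) ^ u ≤ X := by
    calc (t₁ * m) ^ u ≤ (2 * t₁ * u₀) ^ u := Nat.pow_le_pow_left (by nlinarith) u
    _ ≤ X := Nat.pow_le_pow_right (by omega) hu2
  have hkey : 8 * u * θ * (t₁ * m) ^ u ≤ Λ ^ 2 := by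
    calc 8 * u * θ * (t₁ * m) ^ u = (8 * u) * (t₁ * m) ^ u * θ := by ring
    _ ≤ X * X * θ := Nat.mul_le_mul (Nat.mul_le_mul h8u htm) le_rfl
    _ = X * (θ * X) := by ring
    _ ≤ Λ * Λ := Nat.mul_le_mul hXΛ hθXΛ
    _ = Λ ^ 2 := (sq Λ).symm
  have hΛ4 : 4 ≤ Λ := le_trans (hbase.trans (Nat.le_self_pow (by omega) _)) hXΛ
  have hΛ1 : (1 : ℝ) ≤ (Λ : ℝ) := by exact_mod_cast le_trans (by norm_num) hΛ4
  have hΛ0 : (0 : ℝ) < (Λ : ℝ) := by linarith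
  have hne : (Λ : ℝ) ≠ 0 := ne_of_gt hΛ0
  -- ψ u ≥ 1
  have hψ1 : 1 ≤ ψ u := by
    rw [hψ]
    calc (1 : ℤ) = ∏ _j ∈ Finset.Icc (u + 1) u₀, 1 := by simp
    _ ≤ ∏ j ∈ Finset.Icc (u + 1) u₀, ((ω + 3) * (j : ℤ) + 1) := by
        refine Finset.prod_le_prod (fun j _ => by norm_num) fun j hj => ?_
        have h0 : (0 : ℤ) ≤ (ω + 3) * (j : ℤ) :=
          mul_nonneg (by linarith) (by positivity)
        linarith
  -- k = 1 + ω as a natural number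
  obtain ⟨k, hk⟩ : ∃ k : ℕ, (k : ℤ) = 1 + ω := ⟨(ω + 1).toNat, by omega⟩
  -- product of d ≤ Λ ^ ψ u
  have hDΛ : ((∏ i, D i : ℕ) : ℝ) ≤ (Λ : ℝ) := by
    exact_mod_cast (by rw [hΛ]; calc (∏ i, D i) = 1 * 1 * 1 * ∏ i, D i := by ring
      _ ≤ θ * X * (1 + Finset.univ.sup N) * ∏ i, D i :=
        Nat.mul_le_mul (Nat.mul_le_mul (Nat.mul_le_mul hθ (by omega : 1 ≤ X)) hsup) le_rfl :
      ∏ i, D i ≤ Λ)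
  have hprod : (∏ i, (d i : ℝ)) ≤ (Λ : ℝ) ^ (ψ u) := by
    calc (∏ i, (d i : ℝ)) ≤ (∏ i, (D i : ℝ)) * (Λ : ℝ) ^ (ψ u - 1) := hd2
    _ ≤ (Λ : ℝ) * (Λ : ℝ) ^ (ψ u - 1) := by
        apply mul_le_mul_of_nonneg_right _ (zpow_nonneg (le_of_lt hΛ0) _)
        rw [← Nat.cast_prod]; exact hDΛ
    _ = (Λ : ℝ) ^ (ψ u) := by
        rw [← zpow_one_add₀ hne]; congr 1; ring
  have hprodnn : (0 : ℝ) ≤ ∏ i, (d i : ℝ) := Finset.prod_nonneg fun i _ => by positivity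
  have hdpow : (∏ i, (d i : ℝ) ^ (1 + ω)) ≤ (Λ : ℝ) ^ (ψ u * (k : ℤ)) := by
    have h1 : (∏ i, (d i : ℝ) ^ (1 + ω)) = (∏ i, (d i : ℝ)) ^ (k : ℕ) := by
      rw [Finset.prod_zpow, ← hk, zpow_natCast]
    rw [h1]
    calc (∏ i, (d i : ℝ)) ^ (k : ℕ) ≤ ((Λ : ℝ) ^ (ψ u)) ^ (k : ℕ) :=
      pow_le_pow_left₀ hprodnn hprod k
    _ = (Λ : ℝ) ^ (ψ u * (k : ℤ)) := by rw [← zpow_natCast ((Λ:ℝ) ^ (ψ u)), ← zpow_mul]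
  have hnum : 8 * (u : ℝ) * (θ : ℝ) * ((t₁ : ℝ) * (m : ℝ)) ^ u ≤ (Λ : ℝ) ^ (2 : ℤ) := by
    have : ((8 * u * θ * (t₁ * m) ^ u : ℕ) : ℝ) ≤ ((Λ ^ 2 : ℕ) : ℝ) := by exact_mod_cast hkey
    push_cast at this
    rw [show ((2:ℤ)) = ((2:ℕ) : ℤ) by norm_num, zpow_natCast]
    linarith
  have hexp : (2 : ℤ) + ψ u * (k : ℤ) ≤ (ω + 3) * (u : ℤ) * ψ u := by
    have hu' : (1 : ℤ) ≤ (u : ℤ) := by exact_mod_cast hu1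
    have hb : (2 : ℤ) ≤ (ω + 3) * (u : ℤ) - (k : ℤ) := by
      have : (0 : ℤ) ≤ (ω + 3) * ((u : ℤ) - 1) := mul_nonneg (by linarith) (by linarith)
      rw [hk]; nlinarith
    have hmm : (1 : ℤ) * 2 ≤ ψ u * ((ω + 3) * (u : ℤ) - (k : ℤ)) :=
      mul_le_mul hψ1 hb (by norm_num) (by linarith)
    rw [show ψ u * ((ω + 3) * (u : ℤ) - (k : ℤ))
        = (ω + 3) * (u : ℤ) * ψ u - ψ u * (k : ℤ) by ring] at hmm
    linarith
  calc 8 * (u : ℝ) * (θ : ℝ) * ((t₁ : ℝ) * (m : ℝ)) ^ u * ∏ i, (d i : ℝ) ^ (1 + ω)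
      ≤ (Λ : ℝ) ^ (2 : ℤ) * (Λ : ℝ) ^ (ψ u * (k : ℤ)) := by
        apply mul_le_mul hnum hdpow (Finset.prod_nonneg fun i _ => zpow_nonneg (by positivity) _)
          (zpow_nonneg (le_of_lt hΛ0) _)
    _ = (Λ : ℝ) ^ ((2 : ℤ) + ψ u * (k : ℤ)) := (zpow_add₀ hne _ _).symm
    _ ≤ (Λ : ℝ) ^ ((ω + 3) * (u : ℤ) * ψ u) := zpow_le_zpow_right₀ hΛ1 hexp
end

section
/- Let K be a number field, let u ≥ 0, N ≥ 0, D ≥ 1 and B ≥ 1 be integers, let U ∈ K[T₀, ..., T_u] be a nonzero homogeneous polynomial of degree D, and let (M_{jk}) (0 ≤ j ≤ u, 0 ≤ k ≤ N) be integers with |M_{jk}| ≤ B for all j, k. Let U' ∈ K[W₀, ..., W_N] be the polynomial obtained from U by substituting T_j = ∑_{k=0}^{N} M_{jk}·W_k for each j. If U' ≠ 0, then h(U') ≤ h(U) + D·log((N+1)·B) + log C(D+u, D), where h of a nonzero polynomial denotes the absolute logarithmic Weil height of its tuple of coefficients viewed as a point in projective space over K, the height being defined with the maximum norm at the archimedean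 places. -/
open NumberField IsDedekindDomain

/-- The normalized `v`-adic absolute value on a number field `K`, for `v` a finite place
(nonzero prime ideal of the ring of integers): `|x|_v = N(v)^{-v(x)}`, so that the product
formula holds together with the infinite places. -/
noncomputable def vadicAbs {K : Type*} [Field K] [NumberField K]
    (v : HeightOneSpectrum (𝓞 K)) (x : K) : ℝ :=
  (WithZeroMulInt.toNNReal
    (by
      simp only [ne_eq, Nat.cast_eq_zero, Ideal.absNorm_eq_zero_iff]
      exact v.ne_bot : ((Ideal.absNorm v.asIdeal : NNReal)) ≠ 0)
    (v.valuation K x) : ℝ)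

/-- The absolute logarithmic Weil height of the tuple of coefficients of a nonzero
multivariate polynomial over a number field `K`, viewed as a point in projective space:
`h(P) = (1/[K:ℚ]) · (∑_{w infinite} mult(w)·log max_μ |P_μ|_w + ∑_{v finite} log max_μ |P_μ|_v)`,
using the maximum norm at the archimedean places (Bombieri–Gubler, Definition 1.5.4). -/
noncomputable def polyHeight {K : Type*} [Field K] [NumberField K] {σ : Type*}
    (P : MvPolynomial σ K) (hP : P ≠ 0) : ℝ :=
  have hs : P.support.Nonempty :=
    Finset.nonempty_iff_ne_empty.mpr (fun h => hP (MvPolynomial.support_eq_empty.mp h))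
  ((∑ w : InfinitePlace K,
      (w.mult : ℝ) * Real.log (P.support.sup' hs fun μ => w (MvPolynomial.coeff μ P)))
    + ∑ᶠ v : HeightOneSpectrum (𝓞 K),
        Real.log (P.support.sup' hs fun μ => vadicAbs v (MvPolynomial.coeff μ P)))
    / (Module.finrank ℚ K)

section VAbs

variable {K : Type*} [Field K] [NumberField K] (v : HeightOneSpectrum (𝓞 K))

lemma vnorm_ne_zero : ((Ideal.absNorm v.asIdeal : NNReal)) ≠ 0 := by
  simp only [ne_eq, Nat.cast_eq_zero, Ideal.absNorm_eq_zero_iff]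
  exact v.ne_bot

lemma one_lt_vnorm : 1 < ((Ideal.absNorm v.asIdeal : NNReal)) := by
  have h0 : Ideal.absNorm v.asIdeal ≠ 0 := by
    simpa [Ideal.absNorm_eq_zero_iff] using v.ne_bot
  have h1 : Ideal.absNorm v.asIdeal ≠ 1 := by
    rw [Ne, Ideal.absNorm_eq_one_iff]
    exact v.isPrime.ne_top
  have : 1 < Ideal.absNorm v.asIdeal := by omega
  exact_mod_cast this

lemma vadicAbs_def (x : K) :
    vadicAbs v x = (WithZeroMulInt.toNNReal (vnorm_ne_zero v) (v.valuation K x) : ℝ) := rfl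

lemma vadicAbs_nonneg (x : K) : 0 ≤ vadicAbs v x := NNReal.coe_nonneg _

lemma vadicAbs_pos {x : K} (hx : x ≠ 0) : 0 < vadicAbs v x := by
  have := WithZeroMulInt.toNNReal_pos (vnorm_ne_zero v) (((v.valuation K).ne_zero_iff).mpr hx)
  exact_mod_cast this

lemma vadicAbs_mul (x y : K) : vadicAbs v (x * y) = vadicAbs v x * vadicAbs v y := by
  simp only [vadicAbs_def, Valuation.map_mul, map_mul, NNReal.coe_mul]

lemma vadicAbs_add_le (x y : K) :
    vadicAbs v (x + y) ≤ max (vadicAbs v x) (vadicAbs v y) := by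
  have hmono := (WithZeroMulInt.toNNReal_strictMono (one_lt_vnorm v)).monotone
  have h1 : v.valuation K (x + y) ≤ max (v.valuation K x) (v.valuation K y) := (v.valuation K).map_add x y
  have h2 := hmono h1
  rw [hmono.map_max] at h2
  simp only [vadicAbs_def]
  exact_mod_cast h2

lemma vadicAbs_zero : vadicAbs v (0 : K) = 0 := by
  simp [vadicAbs_def]

lemma vadicAbs_sum_le {ι : Type*} {s : Finset ι} (f : ι → K) {t : ℝ} (ht : 0 ≤ t)
    (h : ∀ i ∈ s, vadicAbs v (f i) ≤ t) : vadicAbs v (∑ i ∈ s, f i) ≤ t := by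
  classical
  induction s using Finset.cons_induction with
  | empty => simpa [vadicAbs_zero] using ht
  | cons a s ha ih =>
    rw [Finset.sum_cons]
    refine le_trans (vadicAbs_add_le v _ _) (max_le (h a (Finset.mem_cons_self a s)) ?_)
    exact ih fun i hi => h i (Finset.mem_cons_of_mem hi)

lemma vadicAbs_intCast_le (n : ℤ) : vadicAbs v ((n : K)) ≤ 1 := by
  have hval : v.valuation K ((n : K)) ≤ 1 := by
    have := v.valuation_le_one (K := K) (n : 𝓞 K)
    convert this using 2; simp
  have := (WithZeroMulInt.toNNReal_le_one_iff (one_lt_vnorm v)).mpr hval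
  rw [vadicAbs_def]
  exact_mod_cast this

lemma intValuation_eq_one_of_not_dvd {a : 𝓞 K} (ha : a ≠ 0)
    (h : ¬ v.asIdeal ∣ Ideal.span {a}) : v.intValuation a = 1 := by
  have hle := v.intValuation_le_one a
  have hlt := v.intValuation_lt_one_iff_dvd a
  rcases lt_or_eq_of_le hle with h' | h'
  · exact absurd (hlt.mp h') h
  · exact h'

lemma vadicAbs_finite {x : K} (hx : x ≠ 0) :
    {v : HeightOneSpectrum (𝓞 K) | vadicAbs v x ≠ 1}.Finite := by
  obtain ⟨a, b, hb, hab⟩ := IsFractionRing.div_surjective (A := 𝓞 K) x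
  have hb0 : b ≠ 0 := nonZeroDivisors.ne_zero hb
  have ha0 : a ≠ 0 := by
    rintro rfl
    simp at hab
    exact hx hab.symm
  have hfa : Ideal.span {a} ≠ (⊥ : Ideal (𝓞 K)) := by
    simpa [Ideal.span_singleton_eq_bot] using ha0
  have hfb : Ideal.span {b} ≠ (⊥ : Ideal (𝓞 K)) := by
    simpa [Ideal.span_singleton_eq_bot] using hb0
  refine Set.Finite.subset (Set.Finite.union (Ideal.finite_factors hfa)
    (Ideal.finite_factors hfb)) ?_
  intro v hv
  by_contra hcon
  simp only [Set.mem_union, Set.mem_setOf_eq] at hcon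
  push_neg at hcon
  apply hv
  have hval : v.valuation K x = 1 := by
    rw [← hab, map_div₀, v.valuation_of_algebraMap, v.valuation_of_algebraMap,
      intValuation_eq_one_of_not_dvd v ha0 hcon.1,
      intValuation_eq_one_of_not_dvd v hb0 hcon.2, div_one]
  rw [vadicAbs_def, hval, map_one, NNReal.coe_one]

end VAbs

section Maj

open MvPolynomial

variable {σ : Type*}

lemma maj_mul {P P' Q Q' : MvPolynomial σ ℤ}
    (hP : ∀ ν, |coeff ν P| ≤ coeff ν P') (hQ : ∀ ν, |coeff ν Q| ≤ coeff ν Q') :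
    ∀ ν, |coeff ν (P * Q)| ≤ coeff ν (P' * Q') := by
  classical
  intro ν
  rw [coeff_mul, coeff_mul]
  refine le_trans (Finset.abs_sum_le_sum_abs _ _) (Finset.sum_le_sum ?_)
  intro x _
  rw [abs_mul]
  exact mul_le_mul (hP _) (hQ _) (abs_nonneg _) ((abs_nonneg _).trans (hP _))

lemma maj_one : ∀ ν : σ →₀ ℕ, |coeff ν (1 : MvPolynomial σ ℤ)| ≤ coeff ν 1 := by
  intro ν
  rw [abs_of_nonneg]
  classical
  rw [coeff_one]
  split_ifs <;> norm_num

lemma maj_prod {ι : Type*} {s : Finset ι} {f f' : ι → MvPolynomial σ ℤ}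
    (h : ∀ i ∈ s, ∀ ν, |coeff ν (f i)| ≤ coeff ν (f' i)) :
    ∀ ν, |coeff ν (∏ i ∈ s, f i)| ≤ coeff ν (∏ i ∈ s, f' i) := by
  classical
  induction s using Finset.cons_induction with
  | empty => simpa using maj_one
  | cons a s ha ih =>
    rw [Finset.prod_cons, Finset.prod_cons]
    exact maj_mul (h a (Finset.mem_cons_self a s))
      (ih fun i hi => h i (Finset.mem_cons_of_mem hi))

lemma maj_pow {P P' : MvPolynomial σ ℤ} (h : ∀ ν, |coeff ν P| ≤ coeff ν P') (n : ℕ) :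
    ∀ ν, |coeff ν (P ^ n)| ≤ coeff ν (P' ^ n) := by
  have := maj_prod (s := Finset.range n) (f := fun _ => P) (f' := fun _ => P')
    (fun i _ => h)
  simpa using this

lemma coeff_le_eval_one (P : MvPolynomial σ ℤ) (h : ∀ ν, 0 ≤ coeff ν P) (ν : σ →₀ ℕ) :
    coeff ν P ≤ eval (fun _ => 1) P := by
  classical
  rw [MvPolynomial.eval_eq]
  simp only [one_pow, Finset.prod_const_one, mul_one]
  by_cases hν : ν ∈ P.support
  · exact Finset.single_le_sum (fun i _ => h i) hν
  · rw [MvPolynomial.notMem_support_iff.mp hν]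
    exact Finset.sum_nonneg fun i _ => h i

end Maj

section SupportCard

open MvPolynomial

lemma homog_sum_univ {K : Type*} [CommSemiring K] {u D : ℕ}
    {U : MvPolynomial (Fin (u + 1)) K} (hhom : U.IsHomogeneous D)
    {d : Fin (u + 1) →₀ ℕ} (hd : d ∈ U.support) : ∑ j, d j = D := by
  have h1 : Finsupp.degree d = D := by
    rw [Finsupp.degree_eq_weight_one]
    exact hhom (MvPolynomial.mem_support_iff.mp hd)
  rw [← h1, Finsupp.degree]
  exact (Finset.sum_subset (Finset.subset_univ _)
    (fun j _ hj => Finsupp.notMem_support_iff.mp hj)).symm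

lemma support_card_le {K : Type*} [CommSemiring K] {u D : ℕ}
    (U : MvPolynomial (Fin (u + 1)) K) (hhom : U.IsHomogeneous D) :
    U.support.card ≤ Nat.choose (D + u) D := by
  classical
  have h := Finset.card_le_card_of_injOn
    (f := fun d : Fin (u + 1) →₀ ℕ => Finsupp.toMultiset d)
    (s := U.support)
    (t := (Finset.univ : Finset (Sym (Fin (u + 1)) D)).image Sym.toMultiset)
    (fun d hd => by
      refine Finset.mem_image.mpr ⟨⟨Finsupp.toMultiset d, ?_⟩, Finset.mem_univ _, rfl⟩
      rw [Finsupp.card_toMultiset]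
      have := homog_sum_univ hhom hd
      rw [Finsupp.sum]
      calc (∑ i ∈ d.support, d i) = ∑ j, d j :=
            Finset.sum_subset (Finset.subset_univ _)
              (fun j _ hj => Finsupp.notMem_support_iff.mp hj)
        _ = D := this)
    (fun a _ b _ hab => by
      have := congrArg Multiset.toFinsupp hab
      rwa [Finsupp.toMultiset_toFinsupp, Finsupp.toMultiset_toFinsupp] at this)
  refine le_trans h (le_trans Finset.card_image_le ?_)
  rw [Finset.card_univ, Sym.card_sym_eq_choose]
  simp only [Fintype.card_fin]
  have : u + 1 + D - 1 = D + u := by omega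
  rw [this]

end SupportCard

section LogSup

open MvPolynomial

lemma logsup_support_finite {K : Type*} [Field K] [NumberField K] {σ : Type*}
    (P : MvPolynomial σ K) (hs : P.support.Nonempty) :
    (Function.support fun v : HeightOneSpectrum (𝓞 K) =>
      Real.log (P.support.sup' hs fun μ => vadicAbs v (P.coeff μ))).Finite := by
  classical
  have hfin : (⋃ μ ∈ P.support, {v : HeightOneSpectrum (𝓞 K) |
      vadicAbs v (P.coeff μ) ≠ 1}).Finite :=
    Set.Finite.biUnion (P.support.finite_toSet)
      (fun μ hμ => vadicAbs_finite (MvPolynomial.mem_support_iff.mp hμ))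
  refine hfin.subset ?_
  intro v hv
  simp only [Function.mem_support] at hv
  by_contra hcon
  simp only [Set.mem_iUnion, Set.mem_setOf_eq, not_exists, not_not] at hcon
  apply hv
  have h1 : ∀ μ ∈ P.support, vadicAbs v (P.coeff μ) = 1 := fun μ hμ => hcon μ hμ
  have : (P.support.sup' hs fun μ => vadicAbs v (P.coeff μ)) = 1 := by
    calc (P.support.sup' hs fun μ => vadicAbs v (P.coeff μ))
        = P.support.sup' hs (fun _ => (1 : ℝ)) :=
          Finset.sup'_congr hs rfl h1
      _ = 1 := Finset.sup'_const hs 1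
  rw [this, Real.log_one]

lemma polyHeight_eq {K : Type*} [Field K] [NumberField K] {σ : Type*}
    (P : MvPolynomial σ K) (hP : P ≠ 0) (hs : P.support.Nonempty) :
    polyHeight P hP =
    ((∑ w : InfinitePlace K,
      (w.mult : ℝ) * Real.log (P.support.sup' hs fun μ => w (MvPolynomial.coeff μ P)))
    + ∑ᶠ v : HeightOneSpectrum (𝓞 K),
        Real.log (P.support.sup' hs fun μ => vadicAbs v (MvPolynomial.coeff μ P)))
    / (Module.finrank ℚ K) := rfl

end LogSup


/-- Let `K` be a number field, let `u ≥ 0`, `N ≥ 0`, `D ≥ 1` and `B ≥ 1` be integers, let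
`U ∈ K[T₀, ..., T_u]` be a nonzero homogeneous polynomial of degree `D`, and let `(M_{jk})`
(`0 ≤ j ≤ u`, `0 ≤ k ≤ N`) be integers with `|M_{jk}| ≤ B`. Let `U' ∈ K[W₀, ..., W_N]` be
obtained from `U` by substituting `T_j = ∑_k M_{jk}·W_k`. If `U' ≠ 0`, then
`h(U') ≤ h(U) + D·log((N+1)·B) + log C(D+u, D)`, where `h` of a nonzero polynomial is the
absolute logarithmic Weil height of its tuple of coefficients viewed as a point in
projective space. -/
theorem stmt_17 {K : Type*} [Field K] [NumberField K] (u N D B : ℕ) (hD : 1 ≤ D)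
    (hB : 1 ≤ B) (U : MvPolynomial (Fin (u + 1)) K) (hU : U ≠ 0)
    (hhom : U.IsHomogeneous D)
    (M : Fin (u + 1) → Fin (N + 1) → ℤ) (hM : ∀ j k, |M j k| ≤ (B : ℤ))
    (U' : MvPolynomial (Fin (N + 1)) K)
    (hU'def : U' = MvPolynomial.aeval
      (fun j : Fin (u + 1) => ∑ k : Fin (N + 1), (M j k : K) • MvPolynomial.X k) U)
    (hU' : U' ≠ 0) :
    polyHeight U' hU' ≤ polyHeight U hU + (D : ℝ) * Real.log (((N : ℝ) + 1) * (B : ℝ))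
      + Real.log (Nat.choose (D + u) D) := by
  classical
  have hsU : U.support.Nonempty :=
    Finset.nonempty_iff_ne_empty.mpr (fun h => hU (MvPolynomial.support_eq_empty.mp h))
  have hsU' : U'.support.Nonempty :=
    Finset.nonempty_iff_ne_empty.mpr (fun h => hU' (MvPolynomial.support_eq_empty.mp h))
  set r : ℕ := Module.finrank ℚ K with hr
  have hrpos : 0 < (r : ℝ) := by
    have : 0 < r := Module.finrank_pos
    exact_mod_cast this
  -- the integer polynomials
  set φ : ℤ →+* K := Int.castRingHom K with hφ
  set L : Fin (u + 1) → MvPolynomial (Fin (N + 1)) ℤ :=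
    fun j => ∑ k, MvPolynomial.C (M j k) * MvPolynomial.X k with hL
  set Q : (Fin (u + 1) →₀ ℕ) → MvPolynomial (Fin (N + 1)) ℤ :=
    fun d => ∏ j, (L j) ^ (d j) with hQdef
  have hmapL : ∀ j, MvPolynomial.map φ (L j)
      = ∑ k : Fin (N + 1), (M j k : K) • MvPolynomial.X k := by
    intro j
    rw [hL]
    rw [map_sum]
    refine Finset.sum_congr rfl fun k _ => ?_
    rw [map_mul, MvPolynomial.map_C, MvPolynomial.map_X, MvPolynomial.smul_eq_C_mul]
    norm_num [hφ]
  have hU'eq : U' = ∑ d ∈ U.support,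
      MvPolynomial.C (MvPolynomial.coeff d U) * MvPolynomial.map φ (Q d) := by
    rw [hU'def, MvPolynomial.aeval_def, MvPolynomial.eval₂_eq']
    refine Finset.sum_congr rfl fun d _ => ?_
    have h2 : MvPolynomial.map φ (Q d)
        = ∏ i, (∑ k : Fin (N + 1), ((M i k : K)) • MvPolynomial.X k) ^ d i := by
      rw [hQdef, map_prod]
      exact Finset.prod_congr rfl fun j _ => by rw [map_pow, hmapL]
    rw [h2]
    rfl
  have hcoeff : ∀ ν, MvPolynomial.coeff ν U' = ∑ d ∈ U.support,
      MvPolynomial.coeff d U * ((MvPolynomial.coeff ν (Q d) : ℤ) : K) := by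
    intro ν
    rw [hU'eq, MvPolynomial.coeff_sum]
    refine Finset.sum_congr rfl fun d _ => ?_
    rw [MvPolynomial.coeff_C_mul, MvPolynomial.coeff_map]
    rfl
  -- integer bound on coefficients of Q d
  have hQb : ∀ d ∈ U.support, ∀ ν, |MvPolynomial.coeff ν (Q d)| ≤ (((N : ℤ) + 1) * B) ^ D := by
    intro d hd ν
    set L' : Fin (u + 1) → MvPolynomial (Fin (N + 1)) ℤ :=
      fun j => ∑ k, MvPolynomial.C (|M j k|) * MvPolynomial.X k with hL'
    have hmajL : ∀ j, ∀ m, |MvPolynomial.coeff m (L j)| ≤ MvPolynomial.coeff m (L' j) := by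
      intro j m
      rw [hL, hL']
      rw [MvPolynomial.coeff_sum, MvPolynomial.coeff_sum]
      refine le_trans (Finset.abs_sum_le_sum_abs _ _) (Finset.sum_le_sum fun k _ => ?_)
      rw [MvPolynomial.coeff_C_mul, MvPolynomial.coeff_C_mul, abs_mul]
      gcongr
      rw [MvPolynomial.coeff_X']
      split_ifs <;> simp
    have hmaj : ∀ m, |MvPolynomial.coeff m (Q d)| ≤
        MvPolynomial.coeff m (∏ j, (L' j) ^ (d j)) := by
      rw [hQdef]
      exact maj_prod (fun j _ => maj_pow (hmajL j) (d j))
    have hnn : ∀ m, 0 ≤ MvPolynomial.coeff m (∏ j, (L' j) ^ (d j)) :=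
      fun m => le_trans (abs_nonneg _) (hmaj m)
    refine le_trans (hmaj ν) (le_trans (coeff_le_eval_one _ hnn ν) ?_)
    rw [map_prod]
    have heval : ∀ j, MvPolynomial.eval (fun _ => (1 : ℤ)) (L' j) ≤ ((N : ℤ) + 1) * B := by
      intro j
      rw [hL', map_sum]
      simp only [map_mul, MvPolynomial.eval_C, MvPolynomial.eval_X, mul_one]
      calc (∑ k : Fin (N + 1), |M j k|) ≤ ∑ _k : Fin (N + 1), (B : ℤ) :=
            Finset.sum_le_sum fun k _ => hM j k
        _ = ((N : ℤ) + 1) * B := by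
            rw [Finset.sum_const, Finset.card_univ, Fintype.card_fin, nsmul_eq_mul]
            push_cast
            ring
    have hevalnn : ∀ j, 0 ≤ MvPolynomial.eval (fun _ => (1 : ℤ)) (L' j) := by
      intro j
      rw [hL', map_sum]
      simp only [map_mul, MvPolynomial.eval_C, MvPolynomial.eval_X, mul_one]
      exact Finset.sum_nonneg fun k _ => abs_nonneg _
    calc (∏ j, MvPolynomial.eval (fun _ => (1 : ℤ)) ((L' j) ^ (d j)))
        = ∏ j, (MvPolynomial.eval (fun _ => (1 : ℤ)) (L' j)) ^ (d j) := by
          refine Finset.prod_congr rfl fun j _ => ?_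
          rw [map_pow]
      _ ≤ ∏ j, (((N : ℤ) + 1) * B) ^ (d j) := by
          refine Finset.prod_le_prod (fun j _ => pow_nonneg (hevalnn j) _)
            (fun j _ => pow_le_pow_left₀ (hevalnn j) (heval j) _)
      _ = (((N : ℤ) + 1) * B) ^ (∑ j, d j) := Finset.prod_pow_eq_pow_sum _ _ _
      _ = (((N : ℤ) + 1) * B) ^ D := by rw [homog_sum_univ hhom hd]
  -- real constant
  set Cst : ℝ := ((N : ℝ) + 1) * B with hCst
  have hB1 : (1 : ℝ) ≤ (B : ℝ) := by exact_mod_cast hB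
  have hN0 : (0 : ℝ) ≤ (N : ℝ) := Nat.cast_nonneg _
  have hCst1 : (1 : ℝ) ≤ Cst := by rw [hCst]; nlinarith
  have hCstpos : (0 : ℝ) < Cst := lt_of_lt_of_le one_pos hCst1
  have hcard : U.support.card ≤ Nat.choose (D + u) D := support_card_le U hhom
  have hcardpos : 0 < U.support.card := Finset.card_pos.mpr hsU
  have hchoosepos : 0 < Nat.choose (D + u) D := lt_of_lt_of_le hcardpos hcard
  have hQbR : ∀ d ∈ U.support, ∀ ν, |((MvPolynomial.coeff ν (Q d) : ℤ) : ℝ)| ≤ Cst ^ D := by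
    intro d hd ν
    have h := hQb d hd ν
    rw [hCst]
    have : ((|MvPolynomial.coeff ν (Q d)| : ℤ) : ℝ) ≤ (((((N : ℤ) + 1) * B) ^ D : ℤ) : ℝ) := by
      exact_mod_cast h
    rw [Int.cast_abs] at this
    refine le_trans this (le_of_eq ?_)
    push_cast
    ring
  -- archimedean bound
  have harch : ∀ w : InfinitePlace K,
      Real.log (U'.support.sup' hsU' fun μ => w (MvPolynomial.coeff μ U')) ≤
      Real.log (U.support.sup' hsU fun μ => w (MvPolynomial.coeff μ U))
        + ((D : ℝ) * Real.log Cst + Real.log (Nat.choose (D + u) D)) := by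
    intro w
    set Sw := U.support.sup' hsU fun μ => w (MvPolynomial.coeff μ U) with hSw
    set Sw' := U'.support.sup' hsU' fun μ => w (MvPolynomial.coeff μ U') with hSw'
    obtain ⟨μ₀, hμ₀⟩ := hsU
    have hSwpos : 0 < Sw :=
      lt_of_lt_of_le (InfinitePlace.pos_iff.mpr (MvPolynomial.mem_support_iff.mp hμ₀))
        (Finset.le_sup' (fun μ => w (MvPolynomial.coeff μ U)) hμ₀)
    obtain ⟨ν₀, hν₀⟩ := hsU'
    have hSw'pos : 0 < Sw' :=
      lt_of_lt_of_le (InfinitePlace.pos_iff.mpr (MvPolynomial.mem_support_iff.mp hν₀))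
        (Finset.le_sup' (fun μ => w (MvPolynomial.coeff μ U')) hν₀)
    have hwemb : ∀ x : K, w x = ‖InfinitePlace.embedding w x‖ := by
      intro x
      conv_lhs => rw [← InfinitePlace.mk_embedding w]
      rfl
    have hb : ∀ ν ∈ U'.support,
        w (MvPolynomial.coeff ν U') ≤ (Nat.choose (D + u) D : ℝ) * (Cst ^ D * Sw) := by
      intro ν _
      rw [hwemb, hcoeff ν, map_sum]
      refine le_trans (norm_sum_le _ _) ?_
      have hterm : ∀ d ∈ U.support, ‖InfinitePlace.embedding w
          (MvPolynomial.coeff d U * ((MvPolynomial.coeff ν (Q d) : ℤ) : K))‖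
          ≤ Cst ^ D * Sw := by
        intro d hd
        rw [map_mul, norm_mul]
        have h1 : ‖InfinitePlace.embedding w
            (((MvPolynomial.coeff ν (Q d) : ℤ) : K))‖ ≤ Cst ^ D := by
          rw [map_intCast, Complex.norm_intCast]
          exact hQbR d hd ν
        have h2 : ‖InfinitePlace.embedding w (MvPolynomial.coeff d U)‖ ≤ Sw := by
          rw [← hwemb]
          exact Finset.le_sup' (fun μ => w (MvPolynomial.coeff μ U)) hd
        calc ‖InfinitePlace.embedding w (MvPolynomial.coeff d U)‖
              * ‖InfinitePlace.embedding w (((MvPolynomial.coeff ν (Q d) : ℤ) : K))‖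
            ≤ Sw * Cst ^ D :=
              mul_le_mul h2 h1 (norm_nonneg _) hSwpos.le
          _ = Cst ^ D * Sw := mul_comm _ _
      refine le_trans (Finset.sum_le_sum hterm) ?_
      rw [Finset.sum_const, nsmul_eq_mul]
      have hnn : (0 : ℝ) ≤ Cst ^ D * Sw := by positivity
      have hcc : (U.support.card : ℝ) ≤ (Nat.choose (D + u) D : ℝ) := by exact_mod_cast hcard
      exact mul_le_mul_of_nonneg_right hcc hnn
    have hsb : Sw' ≤ (Nat.choose (D + u) D : ℝ) * (Cst ^ D * Sw) := Finset.sup'_le _ _ hb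
    calc Real.log Sw' ≤ Real.log ((Nat.choose (D + u) D : ℝ) * (Cst ^ D * Sw)) :=
          Real.log_le_log hSw'pos hsb
      _ = Real.log (Nat.choose (D + u) D) + ((D : ℝ) * Real.log Cst + Real.log Sw) := by
          rw [Real.log_mul (by positivity) (by positivity),
            Real.log_mul (by positivity) hSwpos.ne', Real.log_pow]
      _ = Real.log Sw + ((D : ℝ) * Real.log Cst + Real.log (Nat.choose (D + u) D)) := by ring
  -- finite places
  have hTpos : ∀ v : HeightOneSpectrum (𝓞 K),
      0 < (U.support.sup' hsU fun μ => vadicAbs v (MvPolynomial.coeff μ U)) := by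
    intro v
    obtain ⟨μ₀, hμ₀⟩ := hsU
    exact lt_of_lt_of_le (vadicAbs_pos v (MvPolynomial.mem_support_iff.mp hμ₀))
      (Finset.le_sup' (fun μ => vadicAbs v (MvPolynomial.coeff μ U)) hμ₀)
  have hT'pos : ∀ v : HeightOneSpectrum (𝓞 K),
      0 < (U'.support.sup' hsU' fun μ => vadicAbs v (MvPolynomial.coeff μ U')) := by
    intro v
    obtain ⟨ν₀, hν₀⟩ := hsU'
    exact lt_of_lt_of_le (vadicAbs_pos v (MvPolynomial.mem_support_iff.mp hν₀))
      (Finset.le_sup' (fun μ => vadicAbs v (MvPolynomial.coeff μ U')) hν₀)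
  have hvb : ∀ v : HeightOneSpectrum (𝓞 K),
      (U'.support.sup' hsU' fun μ => vadicAbs v (MvPolynomial.coeff μ U'))
      ≤ (U.support.sup' hsU fun μ => vadicAbs v (MvPolynomial.coeff μ U)) := by
    intro v
    refine Finset.sup'_le _ _ fun ν _ => ?_
    rw [hcoeff ν]
    refine vadicAbs_sum_le v _ (hTpos v).le ?_
    intro d hd
    rw [vadicAbs_mul]
    calc vadicAbs v (MvPolynomial.coeff d U) * vadicAbs v (((MvPolynomial.coeff ν (Q d) : ℤ) : K))
        ≤ (U.support.sup' hsU fun μ => vadicAbs v (MvPolynomial.coeff μ U)) * 1 :=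
          mul_le_mul (Finset.le_sup' (fun μ => vadicAbs v (MvPolynomial.coeff μ U)) hd)
            (vadicAbs_intCast_le v _) (vadicAbs_nonneg v _) (hTpos v).le
      _ = _ := mul_one _
  have hfinsum : (∑ᶠ v : HeightOneSpectrum (𝓞 K),
        Real.log (U'.support.sup' hsU' fun μ => vadicAbs v (MvPolynomial.coeff μ U')))
      ≤ ∑ᶠ v : HeightOneSpectrum (𝓞 K),
        Real.log (U.support.sup' hsU fun μ => vadicAbs v (MvPolynomial.coeff μ U)) := by
    have hf' := logsup_support_finite U' hsU'
    have hf := logsup_support_finite U hsU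
    set s := (hf'.union hf).toFinset with hs
    have hsub1 : (Function.support fun v : HeightOneSpectrum (𝓞 K) =>
        Real.log (U'.support.sup' hsU' fun μ => vadicAbs v (MvPolynomial.coeff μ U'))) ⊆ ↑s := by
      intro v hv
      rw [hs]
      simp only [Set.Finite.coe_toFinset]
      exact Set.mem_union_left _ hv
    have hsub2 : (Function.support fun v : HeightOneSpectrum (𝓞 K) =>
        Real.log (U.support.sup' hsU fun μ => vadicAbs v (MvPolynomial.coeff μ U))) ⊆ ↑s := by
      intro v hv
      rw [hs]
      simp only [Set.Finite.coe_toFinset]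
      exact Set.mem_union_right _ hv
    rw [finsum_eq_sum_of_support_subset _ hsub1, finsum_eq_sum_of_support_subset _ hsub2]
    exact Finset.sum_le_sum fun v _ => Real.log_le_log (hT'pos v) (hvb v)
  -- assembly
  rw [polyHeight_eq U' hU' hsU', polyHeight_eq U hU hsU]
  set c : ℝ := (D : ℝ) * Real.log Cst + Real.log (Nat.choose (D + u) D) with hc
  set A : ℝ := ∑ w : InfinitePlace K,
      (w.mult : ℝ) * Real.log (U.support.sup' hsU fun μ => w (MvPolynomial.coeff μ U)) with hA
  set A' : ℝ := ∑ w : InfinitePlace K,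
      (w.mult : ℝ) * Real.log (U'.support.sup' hsU' fun μ => w (MvPolynomial.coeff μ U')) with hA'
  set F : ℝ := ∑ᶠ v : HeightOneSpectrum (𝓞 K),
      Real.log (U.support.sup' hsU fun μ => vadicAbs v (MvPolynomial.coeff μ U)) with hF
  set F' : ℝ := ∑ᶠ v : HeightOneSpectrum (𝓞 K),
      Real.log (U'.support.sup' hsU' fun μ => vadicAbs v (MvPolynomial.coeff μ U')) with hF'
  have hmult : (∑ w : InfinitePlace K, (w.mult : ℝ)) = (r : ℝ) := by
    rw [hr]
    exact_mod_cast InfinitePlace.sum_mult_eq (K := K)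
  have hAle : A' ≤ A + (r : ℝ) * c := by
    have h1 : A' ≤ ∑ w : InfinitePlace K, (w.mult : ℝ)
        * (Real.log (U.support.sup' hsU fun μ => w (MvPolynomial.coeff μ U)) + c) := by
      rw [hA']
      exact Finset.sum_le_sum fun w _ =>
        mul_le_mul_of_nonneg_left (harch w) (Nat.cast_nonneg _)
    refine le_trans h1 (le_of_eq ?_)
    rw [hA]
    rw [show (∑ w : InfinitePlace K, (w.mult : ℝ)
        * (Real.log (U.support.sup' hsU fun μ => w (MvPolynomial.coeff μ U)) + c))
        = (∑ w : InfinitePlace K, (w.mult : ℝ)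
          * Real.log (U.support.sup' hsU fun μ => w (MvPolynomial.coeff μ U)))
          + (∑ w : InfinitePlace K, (w.mult : ℝ)) * c by
      rw [Finset.sum_mul, ← Finset.sum_add_distrib]
      exact Finset.sum_congr rfl fun w _ => by ring]
    rw [hmult]
  have hstep : (A' + F') / (r : ℝ) ≤ ((A + F) + (r : ℝ) * c) / (r : ℝ) := by
    have h2 : A' + F' ≤ (A + F) + (r : ℝ) * c := by linarith
    exact (div_le_div_iff_of_pos_right hrpos).mpr h2
  refine le_trans hstep ?_
  have hcancel : ((A + F) + (r : ℝ) * c) / (r : ℝ) = (A + F) / (r : ℝ) + c := by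
    rw [add_div, mul_div_cancel_left₀ _ hrpos.ne']
  rw [hcancel, hc, hCst]
  linarith
end
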